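/- For every positive integer n, Σ_{k=1}^{n} (n/k) · C(k, n-k) = L_n, where C(k, n-k) is the binomial coefficient (zero when n - k > k) and L_n = Fib(n+1) + Fib(n-1) is the n-th Lucas number (Fib denoting the Fibonacci sequence with Fib(1) = Fib(2) = 1). -/

import Mathlib

lemma fib_sum_choose (m : ℕ) :
    ∑ k ∈ Finset.range (m + 1), Nat.choose k (m - k) = Nat.fib (m + 1) := by
  rw [Nat.fib_succ_eq_sum_choose, Finset.Nat.sum_antidiagonal_eq_sum_range_succ_mk]

lemma icc_sum_choose (m : ℕ) :
    (∑ k ∈ Finset.Icc 1 m, Nat.choose k (m + 1 - k)) + 1 = Nat.fib (m + 2) := by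
  have h1 : (∑ k ∈ Finset.Icc 1 m, Nat.choose k (m + 1 - k)) + 1
      = ∑ k ∈ Finset.Icc 1 (m + 1), Nat.choose k (m + 1 - k) := by
    rw [Finset.sum_Icc_succ_top (by omega : 1 ≤ m + 1)]
    simp
  rw [h1, ← Finset.Ico_add_one_right_eq_Icc, Finset.sum_Ico_eq_sum_range]
  have h2 := fib_sum_choose (m + 1)
  rw [Finset.sum_range_succ' (fun k => Nat.choose k (m + 1 - k)) (m + 1)] at h2
  have h3 : Nat.choose 0 (m + 1 - 0) = 0 := by
    simp [Nat.choose_eq_zero_of_lt]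
  rw [h3, add_zero] at h2
  rw [← h2]
  apply Finset.sum_congr rfl
  intro i _
  congr 1 <;> omega

lemma icc_sum_choose' (m : ℕ) :
    ∑ k ∈ Finset.Icc 1 m, Nat.choose (k - 1) (m - k) = Nat.fib m := by
  rcases Nat.eq_zero_or_pos m with rfl | hm
  · simp
  obtain ⟨p, rfl⟩ : ∃ p, m = p + 1 := ⟨m - 1, by omega⟩
  rw [← Finset.Ico_add_one_right_eq_Icc, Finset.sum_Ico_eq_sum_range]
  have h := fib_sum_choose p
  rw [← h]
  apply Finset.sum_congr rfl
  intro i _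
  congr 1 <;> omega

/-- For every positive integer `n`, `Σ_{k=1}^{n} (n/k) · C(k, n-k) = L_n`, where
`L_n = Fib(n+1) + Fib(n-1)` is the `n`-th Lucas number. -/
theorem stmt_10 (n : ℕ) (hn : 0 < n) :
    ∑ k ∈ Finset.Icc 1 n, ((n : ℚ) / (k : ℚ)) * (k.choose (n - k) : ℚ)
      = (Nat.fib (n + 1) : ℚ) + (Nat.fib (n - 1) : ℚ) := by
  obtain ⟨m, rfl⟩ : ∃ m, n = m + 1 := ⟨n - 1, by omega⟩
  rw [Finset.sum_Icc_succ_top (by omega : 1 ≤ m + 1)]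
  have htop : ((m + 1 : ℕ) : ℚ) / ((m + 1 : ℕ) : ℚ) *
      ((Nat.choose (m + 1) (m + 1 - (m + 1)) : ℕ) : ℚ) = 1 := by
    rw [Nat.sub_self, Nat.choose_zero_right]
    have : ((m + 1 : ℕ) : ℚ) ≠ 0 := by positivity
    field_simp
    simp
  push_cast at htop ⊢
  rw [htop]
  have hpt : ∀ k ∈ Finset.Icc 1 m,
      ((m : ℚ) + 1) / (k : ℚ) * (Nat.choose k (m + 1 - k) : ℚ)
        = (Nat.choose k (m + 1 - k) : ℚ) + (Nat.choose (k - 1) (m - k) : ℚ) := by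
    intro k hk
    simp only [Finset.mem_Icc] at hk
    obtain ⟨hk1, hk2⟩ := hk
    have hk0 : (k : ℚ) ≠ 0 := Nat.cast_ne_zero.mpr (by omega)
    have h1 : k * Nat.choose (k - 1) (m - k) = Nat.choose k (m + 1 - k) * (m + 1 - k) := by
      have h := Nat.add_one_mul_choose_eq (k - 1) (m - k)
      have e1 : k - 1 + 1 = k := by omega
      have e2 : m - k + 1 = m + 1 - k := by omega
      rw [e1, e2] at h
      rw [h]
    have h1q : (k : ℚ) * (Nat.choose (k - 1) (m - k) : ℚ)
        = (Nat.choose k (m + 1 - k) : ℚ) * ((m : ℚ) + 1 - (k : ℚ)) := by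
      have hc := congrArg (Nat.cast : ℕ → ℚ) h1
      push_cast [Nat.cast_sub (by omega : k ≤ m + 1)] at hc
      linarith [hc]
    field_simp
    linear_combination -h1q
  rw [Finset.sum_congr rfl hpt, Finset.sum_add_distrib]
  have hAq : (∑ k ∈ Finset.Icc 1 m, (Nat.choose k (m + 1 - k) : ℚ)) + 1
      = (Nat.fib (m + 2) : ℚ) := by exact_mod_cast congrArg (Nat.cast : ℕ → ℚ) (icc_sum_choose m)
  have hBq : ∑ k ∈ Finset.Icc 1 m, (Nat.choose (k - 1) (m - k) : ℚ)
      = (Nat.fib m : ℚ) := by exact_mod_cast congrArg (Nat.cast : ℕ → ℚ) (icc_sum_choose' m)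
  linarith [hAq, hBq]
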